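/- Let d₀, a, b > 0 satisfy |a - b| < d₀ < a + b. Then the area of the intersection of two disks of radii a and b in ℝ² whose centers are distance d₀ apart equals b²·arccos((d₀² + b² − a²)/(2 d₀ b)) + a²·arccos((d₀² + a² − b²)/(2 d₀ a)) − (1/2)·√(4 d₀² a² − (d₀² − b² + a²)²). -/

import Mathlib

open MeasureTheory Real RealInnerProductSpace

lemma ftc_sqrt (r : ℝ) (hr : 0 < r) (c d : ℝ) (hc : -r ≤ c) (hcd : c ≤ d) (hd : d ≤ r) :
    ∫ x in c..d, 2 * Real.sqrt (r^2 - x^2)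
      = (d * Real.sqrt (r^2 - d^2) + r^2 * Real.arcsin (d / r))
        - (c * Real.sqrt (r^2 - c^2) + r^2 * Real.arcsin (c / r)) := by
  set F : ℝ → ℝ := fun x => x * Real.sqrt (r^2 - x^2) + r^2 * Real.arcsin (x / r) with hF
  have hcontF : ContinuousOn F (Set.Icc c d) := by
    apply Continuous.continuousOn
    exact ((continuous_id.mul (Real.continuous_sqrt.comp (by fun_prop))).add
      (continuous_const.mul (Real.continuous_arcsin.comp (by fun_prop))))
  have hderiv : ∀ x ∈ Set.Ioo c d, HasDerivWithinAt F (2 * Real.sqrt (r^2 - x^2)) (Set.Ioi x) x := by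
    intro x hx
    have hxr : -r < x := lt_of_le_of_lt hc hx.1
    have hxr' : x < r := lt_of_lt_of_le hx.2 hd
    have hspos : 0 < r^2 - x^2 := by nlinarith
    have hs : Real.sqrt (r^2 - x^2) > 0 := Real.sqrt_pos.mpr hspos
    have h1 : HasDerivAt (fun x : ℝ => r^2 - x^2) (-(2*x)) x := by
      simpa using ((hasDerivAt_pow 2 x).const_sub (r^2))
    have h2 : HasDerivAt (fun x : ℝ => Real.sqrt (r^2 - x^2))
        (1 / (2 * Real.sqrt (r^2 - x^2)) * (-(2*x))) x :=
      (Real.hasDerivAt_sqrt hspos.ne').comp x h1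
    have h3 : HasDerivAt (fun x : ℝ => x * Real.sqrt (r^2 - x^2))
        (1 * Real.sqrt (r^2 - x^2) + x * (1 / (2 * Real.sqrt (r^2 - x^2)) * (-(2*x)))) x :=
      (hasDerivAt_id x).mul h2
    have hne1 : x / r ≠ -1 := by
      intro h
      have : x = -r := by field_simp at h; linarith
      linarith
    have hne2 : x / r ≠ 1 := by
      intro h
      have : x = r := by field_simp at h; linarith
      linarith
    have h4 : HasDerivAt (fun x : ℝ => Real.arcsin (x / r))
        (1 / Real.sqrt (1 - (x/r)^2) * (1/r)) x := by
      have := (Real.hasDerivAt_arcsin hne1 hne2).comp x ((hasDerivAt_id x).div_const r)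
      exact this
    have hsqdiv : Real.sqrt (1 - (x/r)^2) = Real.sqrt (r^2 - x^2) / r := by
      have : 1 - (x/r)^2 = (r^2 - x^2) / r^2 := by field_simp
      rw [this, Real.sqrt_div hspos.le, Real.sqrt_sq hr.le]
    have h5 : HasDerivAt F
        ((1 * Real.sqrt (r^2 - x^2) + x * (1 / (2 * Real.sqrt (r^2 - x^2)) * (-(2*x))))
          + r^2 * (1 / Real.sqrt (1 - (x/r)^2) * (1/r))) x := h3.add (h4.const_mul (r^2))
    have heq : (1 * Real.sqrt (r^2 - x^2) + x * (1 / (2 * Real.sqrt (r^2 - x^2)) * (-(2*x))))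
          + r^2 * (1 / Real.sqrt (1 - (x/r)^2) * (1/r)) = 2 * Real.sqrt (r^2 - x^2) := by
      rw [hsqdiv]
      have h6 : Real.sqrt (r^2 - x^2) * Real.sqrt (r^2 - x^2) = r^2 - x^2 :=
        Real.mul_self_sqrt hspos.le
      field_simp
      linear_combination (-1) * h6
    rw [heq] at h5
    exact h5.hasDerivWithinAt
  have hint : IntervalIntegrable (fun x => 2 * Real.sqrt (r^2 - x^2)) volume c d := by
    apply Continuous.intervalIntegrable
    fun_prop
  have := intervalIntegral.integral_eq_sub_of_hasDeriv_right_of_le hcd hcontF hderiv hint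
  rw [this]

lemma lens_area_2d (d₀ a b : ℝ) (ha : 0 < a) (hb : 0 < b) (hd₀ : 0 < d₀)
    (h1 : |a - b| < d₀) (h2 : d₀ < a + b) :
    volume {z : ℝ × ℝ | z.1^2 + z.2^2 ≤ a^2 ∧ (z.1 - d₀)^2 + z.2^2 ≤ b^2} =
      ENNReal.ofReal (b ^ 2 * Real.arccos ((d₀ ^ 2 + b ^ 2 - a ^ 2) / (2 * d₀ * b)) +
        a ^ 2 * Real.arccos ((d₀ ^ 2 + a ^ 2 - b ^ 2) / (2 * d₀ * a)) -
        (1 / 2) * Real.sqrt (4 * d₀ ^ 2 * a ^ 2 - (d₀ ^ 2 - b ^ 2 + a ^ 2) ^ 2)) := by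
  obtain ⟨hab2, hab1⟩ := abs_lt.mp h1
  -- hab2 : -d₀ < a - b, hab1 : a - b < d₀
  set x₀ : ℝ := (d₀^2 + a^2 - b^2) / (2*d₀) with hx₀
  set y₀ : ℝ := x₀ - d₀ with hy₀
  have hx0l : d₀ - b < x₀ := by
    rw [hx₀, lt_div_iff₀ (by linarith : (0:ℝ) < 2*d₀)]; nlinarith
  have hx0r : x₀ < a := by
    rw [hx₀, div_lt_iff₀ (by linarith : (0:ℝ) < 2*d₀)]; nlinarith
  have hmal : -a < d₀ - b := by linarith
  have hy0 : y₀ < b := by rw [hy₀]; linarith [hx0r, h2]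
  set t : ℝ → ℝ := fun x => min (a^2 - x^2) (b^2 - (x - d₀)^2) with ht
  set g : ℝ → ℝ := fun x => 2 * Real.sqrt (t x) with hg
  set S : Set (ℝ × ℝ) := {z : ℝ × ℝ | z.1^2 + z.2^2 ≤ a^2 ∧ (z.1 - d₀)^2 + z.2^2 ≤ b^2} with hS
  have hSm : MeasurableSet S := by
    have : S = {z : ℝ × ℝ | z.1^2 + z.2^2 ≤ a^2} ∩ {z : ℝ × ℝ | (z.1 - d₀)^2 + z.2^2 ≤ b^2} := rfl
    rw [this]
    exact ((isClosed_le (by fun_prop) continuous_const).measurableSet).inter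
      ((isClosed_le (by fun_prop) continuous_const).measurableSet)
  have hslice : ∀ x : ℝ, volume (Prod.mk x ⁻¹' S) = ENNReal.ofReal (g x) := by
    intro x
    have hpre : Prod.mk x ⁻¹' S = {y : ℝ | y^2 ≤ t x} := by
      ext y; simp only [Set.mem_preimage, Set.mem_setOf_eq, hS, ht, le_min_iff]
      constructor <;> intro h <;> constructor <;> linarith [h.1, h.2]
    rw [hpre]
    by_cases htx : 0 ≤ t x
    · have : {y : ℝ | y^2 ≤ t x} = Set.Icc (-Real.sqrt (t x)) (Real.sqrt (t x)) := by
        ext y; simp only [Set.mem_setOf_eq, Set.mem_Icc]; exact Real.sq_le htx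
      rw [this, Real.volume_Icc, hg]
      congr 1; ring
    · have : {y : ℝ | y^2 ≤ t x} = ∅ := by
        ext y; simp only [Set.mem_setOf_eq, Set.mem_empty_iff_false, iff_false, not_le]
        nlinarith [sq_nonneg y]
      rw [this, measure_empty, hg]
      simp [Real.sqrt_eq_zero'.mpr (le_of_not_ge htx)]
  have htc : Continuous t := by fun_prop
  have hgc : Continuous g := by
    rw [hg]; exact continuous_const.mul (Real.continuous_sqrt.comp htc)
  have hsupp : ∀ x : ℝ, x ∉ Set.Icc (d₀ - b) a → g x = 0 := by
    intro x hx
    rw [Set.mem_Icc, not_and_or, not_le, not_le] at hx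
    have : t x ≤ 0 := by
      rcases hx with hx | hx
      · exact min_le_of_right_le (by nlinarith)
      · exact min_le_of_left_le (by nlinarith)
    rw [hg]; simp [Real.sqrt_eq_zero'.mpr this]
  have hInt : Integrable g := by
    apply hgc.integrable_of_hasCompactSupport
    exact HasCompactSupport.intro isCompact_Icc hsupp
  have hvol : volume S = ENNReal.ofReal (∫ x, g x) := by
    rw [MeasureTheory.Measure.volume_eq_prod, Measure.prod_apply hSm]
    simp_rw [hslice]
    rw [← MeasureTheory.ofReal_integral_eq_lintegral_ofReal hInt]
    exact Filter.Eventually.of_forall fun x => by positivity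
  rw [hvol]
  congr 1
  have hItv : ∫ x, g x = ∫ x in (d₀ - b)..a, g x := by
    rw [intervalIntegral.integral_of_le (by linarith), ← MeasureTheory.integral_Icc_eq_integral_Ioc]
    exact (setIntegral_eq_integral_of_forall_compl_eq_zero hsupp).symm
  rw [hItv]
  have hii : ∀ u v : ℝ, IntervalIntegrable g volume u v := fun u v => hgc.intervalIntegrable u v
  rw [← intervalIntegral.integral_add_adjacent_intervals (hii (d₀-b) x₀) (hii x₀ a)]
  have hpiece1 : ∫ x in (d₀-b)..x₀, g x = ∫ x in (d₀-b)..x₀, 2 * Real.sqrt (b^2 - (x - d₀)^2) := by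
    apply intervalIntegral.integral_congr
    intro x hx
    rw [Set.uIcc_of_le (by linarith)] at hx
    have hxx : x * (2*d₀) ≤ d₀^2 + a^2 - b^2 := by
      have h' := hx.2
      rw [hx₀] at h'
      exact (le_div_iff₀ (by linarith : (0:ℝ) < 2*d₀)).mp h'
    simp only [hg, ht]
    rw [min_eq_right (by nlinarith : b^2 - (x - d₀)^2 ≤ a^2 - x^2)]
  have hpiece2 : ∫ x in x₀..a, g x = ∫ x in x₀..a, 2 * Real.sqrt (a^2 - x^2) := by
    apply intervalIntegral.integral_congr
    intro x hx
    rw [Set.uIcc_of_le (by linarith)] at hx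
    have hxx : d₀^2 + a^2 - b^2 ≤ x * (2*d₀) := by
      have h' := hx.1
      rw [hx₀] at h'
      exact (div_le_iff₀ (by linarith : (0:ℝ) < 2*d₀)).mp h'
    simp only [hg, ht]
    rw [min_eq_left (by nlinarith : a^2 - x^2 ≤ b^2 - (x - d₀)^2)]
  rw [hpiece1, hpiece2]
  have hshift : ∫ x in (d₀-b)..x₀, 2 * Real.sqrt (b^2 - (x - d₀)^2)
      = ∫ y in (-b)..y₀, 2 * Real.sqrt (b^2 - y^2) := by
    rw [intervalIntegral.integral_comp_sub_right (fun y => 2 * Real.sqrt (b^2 - y^2)) d₀]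
    have e1 : d₀ - b - d₀ = -b := by ring
    rw [e1, ← hy₀]
  rw [hshift]
  rw [ftc_sqrt b hb (-b) y₀ (le_refl (-b)) (by rw [hy₀]; nlinarith [hx0l]) hy0.le]
  rw [ftc_sqrt a ha x₀ a (by linarith) hx0r.le (le_refl a)]
  -- now pure algebra
  have hb2 : Real.sqrt (b^2 - (-b)^2) = 0 := by rw [neg_sq, sub_self, Real.sqrt_zero]
  have ha2 : Real.sqrt (a^2 - a^2) = 0 := by simp
  have hbb : (-b) / b = -1 := by field_simp
  have haa : a / a = 1 := div_self (ne_of_gt ha)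
  have heqsq : b^2 - y₀^2 = a^2 - x₀^2 := by rw [hy₀, hx₀]; field_simp; try ring
  have harg1 : -(y₀/b) = (d₀ ^ 2 + b ^ 2 - a ^ 2) / (2 * d₀ * b) := by
    rw [hy₀, hx₀]; field_simp; try ring
  have harg2 : x₀/a = (d₀ ^ 2 + a ^ 2 - b ^ 2) / (2 * d₀ * a) := by
    rw [hx₀]; field_simp; try ring
  have hsq2 : Real.sqrt (4 * d₀ ^ 2 * a ^ 2 - (d₀ ^ 2 - b ^ 2 + a ^ 2) ^ 2)
      = 2 * d₀ * Real.sqrt (a^2 - x₀^2) := by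
    have h4 : 4 * d₀ ^ 2 * a ^ 2 - (d₀ ^ 2 - b ^ 2 + a ^ 2) ^ 2 = (2*d₀)^2 * (a^2 - x₀^2) := by
      rw [hx₀]; field_simp; try ring
    rw [h4, Real.sqrt_mul (by positivity), Real.sqrt_sq (by positivity)]
  rw [hb2, ha2, hbb, haa, heqsq]
  rw [Real.arccos_eq_pi_div_two_sub_arcsin, Real.arccos_eq_pi_div_two_sub_arcsin,
    ← harg1, ← harg2, Real.arcsin_neg, Real.arcsin_neg, Real.arcsin_one, hsq2]
  ring

theorem lens_area_formula (p q : EuclideanSpace ℝ (Fin 2)) (d₀ a b : ℝ)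
    (ha : 0 < a) (hb : 0 < b) (hd₀ : 0 < d₀) (hdist : dist p q = d₀)
    (h1 : |a - b| < d₀) (h2 : d₀ < a + b) :
    volume (Metric.closedBall p a ∩ Metric.closedBall q b) =
      ENNReal.ofReal (b ^ 2 * Real.arccos ((d₀ ^ 2 + b ^ 2 - a ^ 2) / (2 * d₀ * b)) +
        a ^ 2 * Real.arccos ((d₀ ^ 2 + a ^ 2 - b ^ 2) / (2 * d₀ * a)) -
        (1 / 2) * Real.sqrt (4 * d₀ ^ 2 * a ^ 2 - (d₀ ^ 2 - b ^ 2 + a ^ 2) ^ 2)) := by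
  classical
  have hqp : ‖q - p‖ = d₀ := by rw [← dist_eq_norm, dist_comm]; exact hdist
  set u : EuclideanSpace ℝ (Fin 2) := (d₀)⁻¹ • (q - p) with hu
  have hun : ‖u‖ = 1 := by
    rw [hu, norm_smul, hqp, norm_inv, Real.norm_of_nonneg hd₀.le,
      inv_mul_cancel₀ (ne_of_gt hd₀)]
  set w : EuclideanSpace ℝ (Fin 2) := (WithLp.equiv 2 (Fin 2 → ℝ)).symm ![-(u 1), u 0] with hw
  have hw0 : w 0 = -(u 1) := rfl
  have hw1 : w 1 = u 0 := rfl
  have hnormsq : ∀ x : EuclideanSpace ℝ (Fin 2), ‖x‖^2 = (x 0)^2 + (x 1)^2 := by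
    intro x
    rw [EuclideanSpace.norm_eq]
    rw [Real.sq_sqrt (by positivity)]
    rw [Fin.sum_univ_two]
    simp [sq_abs]
  have hinner : ∀ x y : EuclideanSpace ℝ (Fin 2), (inner ℝ x y : ℝ) = x 0 * y 0 + x 1 * y 1 := by
    intro x y
    rw [PiLp.inner_apply, Fin.sum_univ_two]
    simp [RCLike.inner_apply, mul_comm]
  have hwn : ‖w‖ = 1 := by
    have h1' := hnormsq w
    have h2' := hnormsq u
    rw [hw0, hw1] at h1'
    rw [hun] at h2'
    nlinarith [norm_nonneg w]
  have h00 : (@inner ℝ _ _ u u) = 1 := by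
    rw [real_inner_self_eq_norm_sq, hun]; norm_num
  have h11 : (@inner ℝ _ _ w w) = 1 := by
    rw [real_inner_self_eq_norm_sq, hwn]; norm_num
  have h01 : (@inner ℝ _ _ u w) = 0 := by rw [hinner, hw0, hw1]; ring
  have h10 : (@inner ℝ _ _ w u) = 0 := by rw [hinner, hw0, hw1]; ring
  have hon : Orthonormal ℝ ![u, w] := by
    rw [orthonormal_iff_ite]
    intro i j
    fin_cases i <;> fin_cases j <;> simp [h00, h01, h10, h11, hun, hwn]
  have hcard : Fintype.card (Fin 2) = Module.finrank ℝ (EuclideanSpace ℝ (Fin 2)) :=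
    by rw [finrank_euclideanSpace_fin]; exact Fintype.card_fin 2
  set B := basisOfLinearIndependentOfCardEqFinrank hon.linearIndependent hcard with hB
  have hBcoe : ⇑B = ![u, w] := coe_basisOfLinearIndependentOfCardEqFinrank _ _
  set OB : OrthonormalBasis (Fin 2) ℝ (EuclideanSpace ℝ (Fin 2)) := B.toOrthonormalBasis (by rwa [hBcoe]) with hOB
  have hOBcoe : ⇑OB = ![u, w] := by rw [hOB, Module.Basis.coe_toOrthonormalBasis, hBcoe]
  set f := OB.repr with hf
  have hfu : f u = EuclideanSpace.single 0 1 := by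
    have : OB 0 = u := by rw [hOBcoe]; rfl
    rw [← this, hf]
    exact OB.repr_self 0
  set c : EuclideanSpace ℝ (Fin 2) := f (q - p) with hc
  have hc0 : c 0 = d₀ := by
    rw [hc]
    have : q - p = d₀ • u := by rw [hu, smul_smul, mul_inv_cancel₀ (ne_of_gt hd₀), one_smul]
    rw [this, f.map_smul, hfu]
    simp [EuclideanSpace.single_apply]
  have hc1 : c 1 = 0 := by
    rw [hc]
    have : q - p = d₀ • u := by rw [hu, smul_smul, mul_inv_cancel₀ (ne_of_gt hd₀), one_smul]
    rw [this, f.map_smul, hfu]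
    simp [EuclideanSpace.single_apply]
  set T : Set (EuclideanSpace ℝ (Fin 2)) :=
    Metric.closedBall 0 a ∩ Metric.closedBall c b with hT
  have hTm : MeasurableSet T :=
    (Metric.isClosed_closedBall.measurableSet).inter (Metric.isClosed_closedBall.measurableSet)
  have hpre : Metric.closedBall p a ∩ Metric.closedBall q b = (fun x => f (x - p)) ⁻¹' T := by
    ext x
    simp only [Set.mem_inter_iff, Set.mem_preimage, hT, Metric.mem_closedBall]
    have e1 : dist (f (x - p)) 0 = dist x p := by
      rw [dist_zero_right, f.norm_map, dist_eq_norm]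
    have e2 : dist (f (x - p)) c = dist x q := by
      rw [hc, f.dist_map, dist_eq_norm, dist_eq_norm]
      congr 1
      abel
    rw [e1, e2]
  have hmp : MeasurePreserving (fun x : EuclideanSpace ℝ (Fin 2) => f (x - p)) volume volume := by
    have h1' : MeasurePreserving (fun x : EuclideanSpace ℝ (Fin 2) => x - p) volume volume :=
      measurePreserving_sub_right volume p
    exact (OB.measurePreserving_repr).comp h1'
  rw [hpre, hmp.measure_preimage hTm.nullMeasurableSet]
  -- now map to ℝ × ℝ
  set e1 := (MeasurableEquiv.toLp 2 (Fin 2 → ℝ)).symm with he1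
  set e2 := MeasurableEquiv.piFinTwo (fun _ : Fin 2 => ℝ) with he2
  have hmp2 : MeasurePreserving (fun x : EuclideanSpace ℝ (Fin 2) => e2 (e1 x)) volume volume :=
    (volume_preserving_piFinTwo _).comp (EuclideanSpace.volume_preserving_symm_measurableEquiv_toLp _)
  set S2 : Set (ℝ × ℝ) :=
    {z : ℝ × ℝ | z.1^2 + z.2^2 ≤ a^2 ∧ (z.1 - d₀)^2 + z.2^2 ≤ b^2} with hS2
  have hS2m : MeasurableSet S2 := by
    have hsplit : S2 = {z : ℝ × ℝ | z.1^2 + z.2^2 ≤ a^2} ∩ {z : ℝ × ℝ | (z.1 - d₀)^2 + z.2^2 ≤ b^2} := rfl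
    rw [hsplit]
    exact ((isClosed_le (by fun_prop) continuous_const).measurableSet).inter
      ((isClosed_le (by fun_prop) continuous_const).measurableSet)
  have hdist_le : ∀ (x y : EuclideanSpace ℝ (Fin 2)) (r : ℝ), 0 ≤ r →
      (dist x y ≤ r ↔ (x 0 - y 0)^2 + (x 1 - y 1)^2 ≤ r^2) := by
    intro x y r hr
    rw [EuclideanSpace.dist_eq, Fin.sum_univ_two, Real.sqrt_le_iff]
    simp only [Real.dist_eq, sq_abs]
    constructor
    · exact fun h => h.2
    · exact fun h => ⟨hr, h⟩
  have hTpre : T = (fun x => e2 (e1 x)) ⁻¹' S2 := by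
    ext x
    have he : e2 (e1 x) = (x 0, x 1) := rfl
    simp only [Set.mem_inter_iff, Set.mem_preimage, hT, hS2, Metric.mem_closedBall, he,
      Set.mem_setOf_eq]
    rw [hdist_le x 0 a ha.le, hdist_le x c b hb.le, hc0, hc1]
    norm_num
  rw [hTpre, hmp2.measure_preimage hS2m.nullMeasurableSet]
  exact lens_area_2d d₀ a b ha hb hd₀ h1 h2
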